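/- For any symmetric positive definite kernel k, the β^k-indicator is bounded: 0 ≤ β^k_R ≤ 1 for every subset R of input indices, and β^k of the full input set equals 1 when the output is a deterministic function of all inputs. -/

import Mathlib

open MeasureTheory
open scoped RealInnerProductSpace

/-- The β^k-indicator of the group of inputs with σ-algebra `m`:
`β^k_R = (E[‖μ_{Y|X_R}‖²] − ‖μ_Y‖²) / (E[k(Y,Y)] − ‖μ_Y‖²)`, where `Z ω = k(·,Y(ω))`
is the feature map of the output, `μ[Z|m]` is the conditional mean embedding and the
numerator equals `E_{X_R}[MMD²[f_Y, f_{Y|X_R}, k]]` (tower identity). -/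
noncomputable def betaIndicator {Ω H : Type*} (m0 : MeasurableSpace Ω)
    [NormedAddCommGroup H] [InnerProductSpace ℝ H] [CompleteSpace H]
    (μ : @MeasureTheory.Measure Ω m0) (Z : Ω → H) (m : MeasurableSpace Ω) : ℝ :=
  ((∫ ω, ‖(μ[Z|m]) ω‖ ^ 2 ∂μ) - ‖∫ ω', Z ω' ∂μ‖ ^ 2) /
    ((∫ ω, ‖Z ω‖ ^ 2 ∂μ) - ‖∫ ω', Z ω' ∂μ‖ ^ 2)

/-- Jensen-type inequality: for a square-integrable vector-valued function on a
probability space, the squared norm of the mean is at most the mean of the squared norm. -/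
lemma sq_norm_integral_le_integral_sq_norm {Ω H : Type*} {mΩ : MeasurableSpace Ω}
    [NormedAddCommGroup H] [InnerProductSpace ℝ H] [CompleteSpace H]
    (μ : Measure Ω) [IsProbabilityMeasure μ] (g : Ω → H)
    (hg : Integrable g μ) (hg2 : Integrable (fun ω => ‖g ω‖ ^ 2) μ) :
    ‖∫ ω, g ω ∂μ‖ ^ 2 ≤ ∫ ω, ‖g ω‖ ^ 2 ∂μ := by
  set c : H := ∫ ω, g ω ∂μ with hc
  have hinner : Integrable (fun ω => ⟪g ω, c⟫) μ := hg.inner_const c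
  have hexp : ∀ ω, ‖g ω - c‖ ^ 2 = ‖g ω‖ ^ 2 - 2 * ⟪g ω, c⟫ + ‖c‖ ^ 2 := fun ω =>
    norm_sub_sq_real (g ω) c
  have hint : ∫ ω, ‖g ω - c‖ ^ 2 ∂μ
      = (∫ ω, ‖g ω‖ ^ 2 ∂μ) - 2 * (∫ ω, ⟪g ω, c⟫ ∂μ) + ‖c‖ ^ 2 := by
    simp_rw [hexp]
    have h1i : Integrable (fun ω => ‖g ω‖ ^ 2 - 2 * ⟪g ω, c⟫) μ :=
      hg2.sub (hinner.const_mul 2)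
    rw [integral_add h1i (integrable_const _),
      integral_sub hg2 (hinner.const_mul 2), integral_const_mul, integral_const]
    simp only [probReal_univ, one_smul]
  have hic : ∫ ω, ⟪g ω, c⟫ ∂μ = ‖c‖ ^ 2 := by
    have hflip : (fun ω => ⟪g ω, c⟫) = fun ω => ⟪c, g ω⟫ :=
      funext fun ω => real_inner_comm _ _
    rw [hflip, integral_inner hg c, ← hc, real_inner_self_eq_norm_sq]
  have hnonneg : 0 ≤ ∫ ω, ‖g ω - c‖ ^ 2 ∂μ :=
    integral_nonneg fun ω => sq_nonneg _
  rw [hint, hic] at hnonneg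
  nlinarith [hnonneg]

/-- The squared `L²` norm is the integral of the pointwise squared norm. -/
lemma Lp_norm_sq_eq_integral_sq_norm {Ω H : Type*} {mΩ : MeasurableSpace Ω}
    [NormedAddCommGroup H] [InnerProductSpace ℝ H]
    (μ : Measure Ω) (u : Lp H 2 μ) : ‖u‖ ^ 2 = ∫ ω, ‖u ω‖ ^ 2 ∂μ := by
  rw [← real_inner_self_eq_norm_sq, L2.inner_def]
  congr 1
  ext ω
  rw [real_inner_self_eq_norm_sq]

/-- **Boundedness of the β^k-indicator.**
On a probability space `(Ω, m0, μ)`, with output feature map `Z ω = k(·,Y(ω))`,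
for any sub-σ-algebra `m = σ(X_R) ≤ m0` the β^k-indicator satisfies
`0 ≤ β^k_R ≤ 1`; moreover, since the output `Y = g(X₁,…,Xₙ)` is a deterministic
function of all the inputs (so `Z` is measurable with respect to the σ-algebra `m0`
generated by the full input set), the β^k of the full input set equals `1`. -/
theorem betaIndicator_bounds
    {Ω H : Type*} [m0 : MeasurableSpace Ω]
    [NormedAddCommGroup H] [InnerProductSpace ℝ H] [CompleteSpace H]
    (μ : Measure Ω) [IsProbabilityMeasure μ]
    (Z : Ω → H) (hZ : Integrable Z μ)
    (hZ2 : Integrable (fun ω => ‖Z ω‖ ^ 2) μ)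
    (hZmeas : StronglyMeasurable[m0] Z)
    (hden : 0 < (∫ ω, ‖Z ω‖ ^ 2 ∂μ) - ‖∫ ω', Z ω' ∂μ‖ ^ 2)
    (m : MeasurableSpace Ω) (hm : m ≤ m0) :
    0 ≤ betaIndicator m0 μ Z m ∧ betaIndicator m0 μ Z m ≤ 1 ∧
      betaIndicator m0 μ Z m0 = 1 := by
  haveI : SigmaFinite (μ.trim hm) := inferInstance
  -- `Z` is in `L²`
  have hZmem : MemLp Z 2 μ :=
    (memLp_two_iff_integrable_sq_norm hZmeas.aestronglyMeasurable).mpr hZ2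
  set f : Lp H 2 μ := hZmem.toLp Z with hf
  have hfZ : (f : Ω → H) =ᵐ[μ] Z := hZmem.coeFn_toLp
  -- the conditional expectation coincides a.e. with `condExpL2`
  have hcond : (condExpL2 H ℝ hm f : Ω → H) =ᵐ[μ] μ[Z|m] := by
    refine ae_eq_condExp_of_forall_setIntegral_eq hm hZ
      (fun s hs hμs => integrableOn_condExpL2_of_measure_ne_top hm hμs.ne f)
      (fun s hs hμs => ?_) (aestronglyMeasurable_condExpL2 hm f)
    rw [integral_condExpL2_eq hm f hs hμs.ne]
    exact integral_congr_ae (ae_restrict_of_ae hfZ)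
  -- `μ[Z|m]` is in `L²` and the key norm identities
  have hcondmem : MemLp (μ[Z|m]) 2 μ :=
    (Lp.memLp ((condExpL2 H ℝ hm f : Lp H 2 μ))).ae_eq hcond
  have hcond2 : Integrable (fun ω => ‖(μ[Z|m]) ω‖ ^ 2) μ :=
    (memLp_two_iff_integrable_sq_norm (μ := μ) hcondmem.aestronglyMeasurable).mp hcondmem
  -- `∫ ‖μ[Z|m]‖² ≤ ∫ ‖Z‖²` by the `L²` contraction property of `condExpL2`
  have hnormsq : ∀ (u : Lp H 2 μ), ‖u‖ ^ 2 = ∫ ω, ‖u ω‖ ^ 2 ∂μ := fun u =>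
    Lp_norm_sq_eq_integral_sq_norm μ u
  have hcontr : (∫ ω, ‖(μ[Z|m]) ω‖ ^ 2 ∂μ) ≤ ∫ ω, ‖Z ω‖ ^ 2 ∂μ := by
    have h1 : (∫ ω, ‖(μ[Z|m]) ω‖ ^ 2 ∂μ)
        = ∫ ω, ‖(condExpL2 H ℝ hm f : Ω → H) ω‖ ^ 2 ∂μ :=
      (integral_congr_ae (hcond.mono fun ω hω => by rw [hω])).symm
    have h2 : (∫ ω, ‖Z ω‖ ^ 2 ∂μ) = ∫ ω, ‖(f : Ω → H) ω‖ ^ 2 ∂μ :=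
      (integral_congr_ae (hfZ.mono fun ω hω => by rw [hω])).symm
    rw [h1, h2, ← hnormsq, ← hnormsq]
    have hle := norm_condExpL2_coe_le (𝕜 := ℝ) hm f
    exact pow_le_pow_left₀ (norm_nonneg _) hle 2
  -- mean of the conditional expectation equals the mean
  have hmean : (∫ ω, (μ[Z|m]) ω ∂μ) = ∫ ω', Z ω' ∂μ := integral_condExp (μ := μ) hm
  -- numerator is nonnegative
  have hnum : 0 ≤ (∫ ω, ‖(μ[Z|m]) ω‖ ^ 2 ∂μ) - ‖∫ ω', Z ω' ∂μ‖ ^ 2 := by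
    have := sq_norm_integral_le_integral_sq_norm μ (μ[Z|m]) integrable_condExp hcond2
    rw [hmean] at this
    linarith
  refine ⟨?_, ?_, ?_⟩
  · exact div_nonneg hnum hden.le
  · rw [betaIndicator, div_le_one hden]
    linarith
  · have heq : μ[Z|m0] = Z := condExp_of_stronglyMeasurable le_rfl hZmeas hZ
    rw [betaIndicator, heq, div_self hden.ne']
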